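/- The minimum over sampler kernels σ (assigning to each x ∈ 𝒳_ℳ a pmf σ(·|x) on 𝒜_k) of the quantity Δ(σ) := Σ_{A ∈ 𝒜_k} Σ_{x_A-values} min_{y ∈ 𝒴} Σ_{x : x restricted to A equals x_A} P(x) σ(A|x) d(x, y) is attained by a conditional point-mass sampler: min over all σ of Δ(σ) equals min over maps h : 𝒳_ℳ → 𝒜_k of Δ(δ_h), where δ_h(A|x) = 1(A = h(x)). -/

import Mathlib

noncomputable section

/-- A probability mass function on a finite type. -/
def IsPMF {T : Type*} [Fintype T] (p : T → ℝ) : Prop :=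
  (∀ t, 0 ≤ p t) ∧ ∑ t, p t = 1

/-- Mutual information of a joint pmf `Q` on a product of two finite types;
terms with `Q p = 0` vanish since `0 * log _ = 0`. -/
def mutInfo {α β : Type*} [Fintype α] [Fintype β] (Q : α × β → ℝ) : ℝ :=
  ∑ p : α × β, Q p * Real.log (Q p / ((∑ b, Q (p.1, b)) * (∑ a, Q (a, p.2))))

/-- The family `𝒜_k` of `k`-element subsets of `{1, …, m}`. -/
abbrev SetsK (m k : ℕ) := {A : Finset (Fin m) // A.card = k}

variable {m : ℕ} {X : Fin m → Type} [∀ i, Fintype (X i)] [∀ i, DecidableEq (X i)]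
  [∀ i, Nonempty (X i)] {Y : Type} [Fintype Y] [Nonempty Y]

/-- Restriction of `x ∈ 𝒳_ℳ` to the coordinates in `A`. -/
def restr (A : Finset (Fin m)) (x : ∀ i, X i) : ∀ i : A, X i.1 := fun i => x i.1

/-- The marginal pmf `P_{X_A}` of the coordinates in `A`. -/
def margA (P : (∀ i, X i) → ℝ) (A : Finset (Fin m)) (xA : ∀ i : A, X i.1) : ℝ :=
  ∑ x : ∀ i, X i, if restr A x = xA then P x else 0

/-- The modified distortion `d_A(x_A, y)`. -/
def dAk (P : (∀ i, X i) → ℝ) (d : (∀ i, X i) → Y → ℝ) (A : Finset (Fin m))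
    (xA : ∀ i : A, X i.1) (y : Y) : ℝ :=
  (∑ x : ∀ i, X i, if restr A x = xA then P x * d x y else 0) / margA P A xA

/-- The fixed-set rate distortion function `R_A(Δ)`: the minimum of `I(X_A ∧ Y)` over
joint pmfs of `(X_A, Y)` with first marginal `P_{X_A}` and `E[d_A(X_A,Y)] ≤ Δ`. -/
def RAk (P : (∀ i, X i) → ℝ) (d : (∀ i, X i) → Y → ℝ) (A : Finset (Fin m)) (Δ : ℝ) : ℝ :=
  sInf {r | ∃ Q : (∀ i : A, X i.1) × Y → ℝ, IsPMF Q ∧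
    (∀ xA, ∑ y, Q (xA, y) = margA P A xA) ∧
    (∑ p : (∀ i : A, X i.1) × Y, Q p * dAk P d A p.1 p.2) ≤ Δ ∧ mutInfo Q = r}

/-- `Δ_min,A = Σ_{x_A} P_{X_A}(x_A) min_y d_A(x_A, y)`. -/
def DminA (P : (∀ i, X i) → ℝ) (d : (∀ i, X i) → Y → ℝ) (A : Finset (Fin m)) : ℝ :=
  ∑ xA : ∀ i : A, X i.1,
    margA P A xA * Finset.univ.inf' Finset.univ_nonempty (fun y => dAk P d A xA y)

/-- `Δ(σ)`: the minimum achievable expected distortion when sampling with `σ`,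
`Σ_{A ∈ 𝒜_k} Σ_{x_A} min_y Σ_{x : x|_A = x_A} P(x) σ(A|x) d(x,y)`. -/
def DeltaOf (k : ℕ) (P : (∀ i, X i) → ℝ) (d : (∀ i, X i) → Y → ℝ)
    (σ : (∀ i, X i) → SetsK m k → ℝ) : ℝ :=
  ∑ A : SetsK m k, ∑ xA : ∀ i : A.1, X i.1,
    Finset.univ.inf' Finset.univ_nonempty
      (fun y => ∑ x, if restr A.1 x = xA then P x * σ x A * d x y else 0)

/-- the minimum of `Δ(σ)` over sampler kernels is attained by a
conditional point-mass sampler: the minimum over all `σ` equals the minimum over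
point-mass samplers `δ_h`. -/
theorem stmt16 (k : ℕ) (hk1 : 1 ≤ k) (hkm : k ≤ m)
    (P : (∀ i, X i) → ℝ) (hP : IsPMF P) (hfull : ∀ x, 0 < P x)
    (d : (∀ i, X i) → Y → ℝ) (hd : ∀ x y, 0 ≤ d x y) :
    sInf {r | ∃ σ : (∀ i, X i) → SetsK m k → ℝ,
        (∀ x, IsPMF (σ x)) ∧ DeltaOf k P d σ = r} =
    sInf {r | ∃ h : (∀ i, X i) → SetsK m k,
        DeltaOf k P d (fun x A => if A = h x then 1 else 0) = r} := by
  classical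
  obtain ⟨A0, _, hA0card⟩ := Finset.exists_subset_card_eq (s := (Finset.univ : Finset (Fin m))) (n := k)
    (by simpa using hkm)
  have hSne : Nonempty (SetsK m k) := ⟨⟨A0, hA0card⟩⟩
  set S1 := {r | ∃ σ : (∀ i, X i) → SetsK m k → ℝ,
      (∀ x, IsPMF (σ x)) ∧ DeltaOf k P d σ = r} with hS1def
  set D : ((∀ i, X i) → SetsK m k) → ℝ :=
    fun h => DeltaOf k P d (fun x A => if A = h x then 1 else 0) with hDdef
  have hS2range : {r | ∃ h : (∀ i, X i) → SetsK m k,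
      DeltaOf k P d (fun x A => if A = h x then 1 else 0) = r} = Set.range D := rfl
  rw [hS2range]
  -- δ_h is a pmf kernel
  have hδpmf : ∀ h : (∀ i, X i) → SetsK m k,
      ∀ x, IsPMF (fun A => if A = h x then (1:ℝ) else 0) := by
    intro h x
    constructor
    · intro A; dsimp only; split <;> norm_num
    · simp
  have hsub : Set.range D ⊆ S1 := by
    rintro r ⟨h, rfl⟩
    exact ⟨_, hδpmf h, rfl⟩
  have hS2ne : (Set.range D).Nonempty := Set.range_nonempty D
  have hS1ne : S1.Nonempty := hS2ne.mono hsub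
  have hbdd2 : BddBelow (Set.range D) := (Set.finite_range D).bddBelow
  -- nonnegativity of DeltaOf
  have hΔnonneg : ∀ σ : (∀ i, X i) → SetsK m k → ℝ, (∀ x A, 0 ≤ σ x A) →
      0 ≤ DeltaOf k P d σ := by
    intro σ hσ
    refine Finset.sum_nonneg fun A _ => Finset.sum_nonneg fun xA _ => ?_
    refine Finset.le_inf' _ _ fun y _ => Finset.sum_nonneg fun x _ => ?_
    split
    · exact mul_nonneg (mul_nonneg (hfull x).le (hσ x A)) (hd x y)
    · exact le_refl 0
  have hbdd1 : BddBelow S1 := by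
    refine ⟨0, ?_⟩
    rintro r ⟨σ, hσ, rfl⟩
    exact hΔnonneg σ fun x A => (hσ x).1 A
  -- main inequality: for any pmf kernel σ, sInf (range D) ≤ DeltaOf σ
  have hmain : ∀ σ : (∀ i, X i) → SetsK m k → ℝ, (∀ x, IsPMF (σ x)) →
      sInf (Set.range D) ≤ DeltaOf k P d σ := by
    intro σ hσ
    set w : ((∀ i, X i) → SetsK m k) → ℝ := fun h => ∏ x, σ x (h x) with hwdef
    have hw0 : ∀ h, 0 ≤ w h := fun h => Finset.prod_nonneg fun x _ => (hσ x).1 (h x)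
    have hw1 : ∑ h, w h = 1 := by
      have : ∑ h : (∀ i, X i) → SetsK m k, ∏ x, σ x (h x) = ∏ x, ∑ A, σ x A := by
        rw [Finset.prod_univ_sum]; rfl
      rw [hwdef, this]
      simp [(hσ _).2]
    have hdecomp : ∀ x A, σ x A = ∑ h, w h * (if A = h x then 1 else 0) := by
      intro x A
      have key : ∀ h : (∀ i, X i) → SetsK m k,
          w h * (if A = h x then (1:ℝ) else 0) =
          ∏ x', (if x' = x then (if A = h x' then σ x' (h x') else 0) else σ x' (h x')) := by
        intro h
        by_cases hxA : A = h x
        · rw [if_pos hxA, mul_one]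
          refine Finset.prod_congr rfl fun x' _ => ?_
          by_cases hx' : x' = x
          · subst hx'; rw [if_pos rfl, if_pos hxA]
          · rw [if_neg hx']
        · rw [if_neg hxA, mul_zero]
          refine (Finset.prod_eq_zero (Finset.mem_univ x) ?_).symm
          rw [if_pos rfl, if_neg hxA]
      rw [Finset.sum_congr rfl fun h _ => key h]
      have : ∑ h : (∀ i, X i) → SetsK m k,
          ∏ x', (if x' = x then (if A = h x' then σ x' (h x') else 0) else σ x' (h x')) =
          ∏ x', ∑ B, (if x' = x then (if A = B then σ x' B else 0) else σ x' B) := by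
        rw [Finset.prod_univ_sum]; rfl
      rw [this]
      have hfac : ∀ x', (∑ B, (if x' = x then (if A = B then σ x' B else 0) else σ x' B)) =
          (if x' = x then σ x A else 1) := by
        intro x'
        by_cases hx' : x' = x
        · subst hx'; simp
        · simp only [if_neg hx']; exact (hσ x').2
      rw [Finset.prod_congr rfl fun x' _ => hfac x']
      simp
    -- linearity of the inner sums
    have hlin : ∀ (A : SetsK m k) (xA : ∀ i : A.1, X i.1) (y : Y),
        (∑ x, if restr A.1 x = xA then P x * σ x A * d x y else 0) =
        ∑ h, w h * (∑ x, if restr A.1 x = xA then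
          P x * (if A = h x then 1 else 0) * d x y else 0) := by
      intro A xA y
      have hms : ∀ h : (∀ i, X i) → SetsK m k,
          w h * (∑ x, if restr A.1 x = xA then
            P x * (if A = h x then 1 else 0) * d x y else 0) =
          ∑ x, w h * (if restr A.1 x = xA then
            P x * (if A = h x then 1 else 0) * d x y else 0) :=
        fun h => Finset.mul_sum _ _ _
      rw [Finset.sum_congr rfl fun h _ => hms h, Finset.sum_comm]
      refine Finset.sum_congr rfl fun x _ => ?_
      by_cases hc : restr A.1 x = xA
      · simp only [if_pos hc]
        rw [hdecomp x A, Finset.mul_sum, Finset.sum_mul]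
        refine Finset.sum_congr rfl fun h _ => ?_
        ring
      · simp [if_neg hc]
    -- pointwise bound on each inf'
    have hpt : ∀ (A : SetsK m k) (xA : ∀ i : A.1, X i.1),
        (∑ h, w h * Finset.univ.inf' Finset.univ_nonempty
          (fun y => ∑ x, if restr A.1 x = xA then
            P x * (if A = h x then 1 else 0) * d x y else 0)) ≤
        Finset.univ.inf' Finset.univ_nonempty
          (fun y => ∑ x, if restr A.1 x = xA then P x * σ x A * d x y else 0) := by
      intro A xA
      refine Finset.le_inf' _ _ fun y _ => ?_
      rw [hlin A xA y]
      refine Finset.sum_le_sum fun h _ => ?_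
      refine mul_le_mul_of_nonneg_left ?_ (hw0 h)
      exact Finset.inf'_le _ (Finset.mem_univ y)
    have hchain : ∑ h, w h * D h ≤ DeltaOf k P d σ := by
      unfold DeltaOf
      have heq : ∑ h, w h * D h = ∑ A : SetsK m k, ∑ xA : ∀ i : A.1, X i.1,
          ∑ h, w h * Finset.univ.inf' Finset.univ_nonempty
            (fun y => ∑ x, if restr A.1 x = xA then
              P x * (if A = h x then 1 else 0) * d x y else 0) := by
        have step1 : ∀ h, w h * D h = ∑ A : SetsK m k, ∑ xA : ∀ i : A.1, X i.1,
            w h * Finset.univ.inf' Finset.univ_nonempty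
              (fun y => ∑ x, if restr A.1 x = xA then
                P x * (if A = h x then 1 else 0) * d x y else 0) := by
          intro h
          rw [hDdef]
          simp only [DeltaOf, Finset.mul_sum]
        rw [Finset.sum_congr rfl fun h _ => step1 h, Finset.sum_comm]
        exact Finset.sum_congr rfl fun A _ => Finset.sum_comm
      rw [heq]
      exact Finset.sum_le_sum fun A _ => Finset.sum_le_sum fun xA _ => hpt A xA
    refine le_trans ?_ hchain
    have hDge : ∀ h, sInf (Set.range D) ≤ D h := fun h => csInf_le hbdd2 ⟨h, rfl⟩
    calc sInf (Set.range D) = ∑ h, w h * sInf (Set.range D) := by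
          rw [← Finset.sum_mul, hw1, one_mul]
      _ ≤ ∑ h, w h * D h :=
          Finset.sum_le_sum fun h _ => mul_le_mul_of_nonneg_left (hDge h) (hw0 h)
  refine le_antisymm (csInf_le_csInf hbdd1 hS2ne hsub) (le_csInf hS1ne ?_)
  rintro r ⟨σ, hσ, rfl⟩
  exact hmain σ hσ
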